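/- Let (a_i)_{i≥0} and (o_i)_{i≥0} be sequences of nonnegative reals with a_0 = o_0 = 1, and suppose A := Σ_{i≥0} a_i < ∞ and O := Σ_{i≥0} o_i < ∞. Let c > 1 be a real number such that for every i ≥ 0, c · Σ_{j≥i} (a_{j+1} − 2 o_{j+1})/(j+1) ≤ a_i (the series on the left converges absolutely since A and O are finite). Then A ≤ (2c/(c−1)) · O. -/

import Mathlib

/-- if `(a_i)` and `(o_i)` are summable nonnegative sequences with
`a_0 = o_0 = 1`, and `c > 1` satisfies
`c · Σ_{j≥i} (a_{j+1} − 2 o_{j+1})/(j+1) ≤ a_i` for every `i ≥ 0`, then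
`Σ_i a_i ≤ (2c/(c−1)) · Σ_i o_i`. -/
theorem noncompletion_probability_bound
    (a o : ℕ → ℝ)
    (ha0 : a 0 = 1) (ho0 : o 0 = 1)
    (han : ∀ i, 0 ≤ a i) (hon : ∀ i, 0 ≤ o i)
    (hA : Summable a) (hO : Summable o)
    (c : ℝ) (hc : 1 < c)
    (hkey : ∀ i : ℕ,
      c * ∑' j : ℕ, (a (i + j + 1) - 2 * o (i + j + 1)) / ((i + j + 1 : ℕ) : ℝ) ≤ a i) :
    ∑' i : ℕ, a i ≤ (2 * c / (c - 1)) * ∑' i : ℕ, o i := by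
  classical
  set b : ℕ → ℝ := fun n => (a (n + 1) - 2 * o (n + 1)) / ((n + 1 : ℕ) : ℝ) with hb
  set F : ℕ × ℕ → ℝ := fun p => b (p.1 + p.2) with hFdef
  -- summability of the shifted sequences
  have hA' : Summable (fun n => a (n + 1)) := (summable_nat_add_iff 1).2 hA
  have hO' : Summable (fun n => o (n + 1)) := (summable_nat_add_iff 1).2 hO
  have hbound : Summable (fun n => a (n + 1) + 2 * o (n + 1)) :=
    hA'.add (hO'.mul_left 2)
  -- the weighted sequence (n+1) * |b n| is summable
  have hwb : Summable (fun n => ((n + 1 : ℕ) : ℝ) * |b n|) := by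
    apply Summable.of_nonneg_of_le (fun n => by positivity) _ hbound
    intro n
    have hn : ((n + 1 : ℕ) : ℝ) ≠ 0 := by exact_mod_cast Nat.succ_ne_zero n
    rw [hb]
    rw [abs_div, abs_of_nonneg (show (0:ℝ) ≤ ((n + 1 : ℕ) : ℝ) from Nat.cast_nonneg _),
      mul_div_cancel₀ _ hn]
    calc |a (n + 1) - 2 * o (n + 1)| ≤ |a (n + 1)| + |2 * o (n + 1)| := abs_sub _ _
      _ = a (n + 1) + 2 * o (n + 1) := by
          rw [abs_of_nonneg (han _), abs_of_nonneg (mul_nonneg (by norm_num) (hon _))]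
  -- summability of F over ℕ × ℕ, via the antidiagonal decomposition
  have hcard : ∀ n : ℕ, Nat.card (Finset.HasAntidiagonal.antidiagonal n) = n + 1 := by
    intro n
    rw [Nat.card_eq_fintype_card, Fintype.card_coe, Finset.Nat.card_antidiagonal]
  have hGabs : Summable (fun x : Σ n : ℕ, Finset.HasAntidiagonal.antidiagonal n => |b x.1|) := by
    rw [summable_sigma_of_nonneg (fun x => abs_nonneg _)]
    constructor
    · intro n; exact Summable.of_finite
    · apply Summable.congr hwb
      intro n
      have h : ∑' (_ : Finset.HasAntidiagonal.antidiagonal n), |b n| = ((n + 1 : ℕ) : ℝ) * |b n| := by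
        rw [tsum_const, hcard n, nsmul_eq_mul]
      exact h.symm
  have hG : Summable (fun x : Σ n : ℕ, Finset.HasAntidiagonal.antidiagonal n => b x.1) :=
    hGabs.of_abs
  have hFeq : ∀ x : Σ n : ℕ, Finset.HasAntidiagonal.antidiagonal n,
      F (Finset.HasAntidiagonal.sigmaAntidiagonalEquivProd x) = b x.1 := by
    rintro ⟨n, ⟨k, l⟩, h⟩
    rw [Finset.HasAntidiagonal.mem_antidiagonal] at h
    simp [hFdef, Finset.HasAntidiagonal.sigmaAntidiagonalEquivProd, h]
  have hF : Summable F := by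
    rw [← Finset.HasAntidiagonal.sigmaAntidiagonalEquivProd.summable_iff]
    exact hG.congr fun x => (hFeq x).symm
  -- compute the double sum
  have hsum1 : ∑' p : ℕ × ℕ, F p = ∑' n : ℕ, ((n + 1 : ℕ) : ℝ) * b n := by
    rw [← Finset.HasAntidiagonal.sigmaAntidiagonalEquivProd.tsum_eq F]
    rw [tsum_congr hFeq, Summable.tsum_sigma hG]
    apply tsum_congr
    intro n
    have h : ∑' (_ : Finset.HasAntidiagonal.antidiagonal n), b n = ((n + 1 : ℕ) : ℝ) * b n := by
      rw [tsum_const, hcard n, nsmul_eq_mul]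
    exact h
  have hsum2 : ∑' n : ℕ, ((n + 1 : ℕ) : ℝ) * b n
      = ∑' n : ℕ, (a (n + 1) - 2 * o (n + 1)) := by
    apply tsum_congr
    intro n
    have hn : ((n + 1 : ℕ) : ℝ) ≠ 0 := by exact_mod_cast Nat.succ_ne_zero n
    rw [hb, mul_div_cancel₀ _ hn]
  have hsum3 : ∑' n : ℕ, (a (n + 1) - 2 * o (n + 1))
      = (∑' i, a i) - 2 * ∑' i, o i + 1 := by
    rw [Summable.tsum_sub hA' (hO'.mul_left 2), tsum_mul_left]
    have h1 : ∑' i, a i = a 0 + ∑' n, a (n + 1) := Summable.tsum_eq_zero_add hA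
    have h2 : ∑' i, o i = o 0 + ∑' n, o (n + 1) := Summable.tsum_eq_zero_add hO
    rw [ha0] at h1; rw [ho0] at h2
    linarith
  -- sum the key inequality over i
  have ht : Summable (fun i => ∑' j, F (i, j)) := hF.prod
  have htc : Summable (fun i => c * ∑' j, F (i, j)) := ht.mul_left c
  have hkey' : ∀ i, c * ∑' j, F (i, j) ≤ a i := by
    intro i
    have := hkey i
    have heq : (fun j : ℕ => F (i, j))
        = fun j : ℕ => (a (i + j + 1) - 2 * o (i + j + 1)) / ((i + j + 1 : ℕ) : ℝ) := by
      funext j; simp [hFdef, hb]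
    rw [heq]
    exact this
  have hle : ∑' i, (c * ∑' j, F (i, j)) ≤ ∑' i, a i := Summable.tsum_le_tsum hkey' htc hA
  rw [tsum_mul_left, ← Summable.tsum_prod hF, hsum1, hsum2, hsum3] at hle
  -- conclude by algebra
  set A := ∑' i, a i
  set O := ∑' i, o i
  have hOnn : 0 ≤ O := tsum_nonneg hon
  have hd : (0:ℝ) < c - 1 := by linarith
  rw [div_mul_eq_mul_div, le_div_iff₀ hd]
  nlinarith [hle]
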